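/- Let G be a group, H a subgroup of G, and A a nonempty finite subset of G. Then |A·A⁻¹ ∩ H| ≥ |A| / |π_{G/H}(A)|, where π_{G/H}(A) is the set of right cosets Hg meeting A. In particular |A·A⁻¹ ∩ H| ≥ |A| / [G : H] when the index is finite. -/

import Mathlib

open Pointwise

theorem stmt_4 {G : Type*} [Group G] [DecidableEq G] (H : Subgroup G)
    [DecidablePred (· ∈ H)] [DecidableEq (Quotient (QuotientGroup.rightRel H))]
    (A : Finset G) (hA : A.Nonempty) :
    (A.card : ℝ) / ((A.image fun a => Quotient.mk (QuotientGroup.rightRel H) a).card : ℝ)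
        ≤ (((A * A⁻¹).filter (· ∈ H)).card : ℝ)
      ∧ (H.index ≠ 0 →
        (A.card : ℝ) / (H.index : ℝ) ≤ (((A * A⁻¹).filter (· ∈ H)).card : ℝ)) := by
  set mk := fun a : G => Quotient.mk (QuotientGroup.rightRel H) a with hmk
  set Q := A.image mk with hQ
  set T := (A * A⁻¹).filter (· ∈ H) with hT
  -- each fiber has card ≤ T.card
  have fiber_le : ∀ q ∈ Q, (A.filter fun b => mk b = q).card ≤ T.card := by
    intro q hq
    obtain ⟨a, ha, rfl⟩ := Finset.mem_image.mp hq
    apply Finset.card_le_card_of_injOn (fun b => b * a⁻¹)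
    · intro b hb
      simp only [hT, Finset.mem_coe, Finset.mem_filter] at hb ⊢
      obtain ⟨hbA, hbq⟩ := hb
      refine ⟨?_, ?_⟩
      · exact Finset.mul_mem_mul hbA (Finset.inv_mem_inv ha)
      · have h1 : a * b⁻¹ ∈ H := QuotientGroup.rightRel_apply.mp (Quotient.exact hbq)
        simpa using H.inv_mem h1
    · intro x _ y _ h
      exact mul_right_cancel h
  have key : A.card ≤ Q.card * T.card := by
    calc A.card = ∑ q ∈ Q, (A.filter fun b => mk b = q).card :=
          Finset.card_eq_sum_card_fiberwise (fun a ha => Finset.mem_image_of_mem mk ha)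
      _ ≤ Q.card * T.card := Finset.sum_le_card_nsmul Q _ T.card fiber_le
  have hQpos : 0 < Q.card := Finset.card_pos.mpr (hA.image mk)
  have first : (A.card : ℝ) / (Q.card : ℝ) ≤ (T.card : ℝ) := by
    rw [div_le_iff₀ (by exact_mod_cast hQpos)]
    calc (A.card : ℝ) ≤ (Q.card * T.card : ℕ) := by exact_mod_cast key
      _ = (T.card : ℝ) * Q.card := by push_cast; ring
  refine ⟨first, fun hind => ?_⟩
  have hQle : Q.card ≤ H.index := by
    have : H.index = Nat.card (Quotient (QuotientGroup.rightRel H)) := by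
      rw [Subgroup.index, Nat.card_congr (QuotientGroup.quotientRightRelEquivQuotientLeftRel H)]
    rw [this]
    have hfin : Finite (Quotient (QuotientGroup.rightRel H)) := by
      rw [this] at hind
      exact Nat.finite_of_card_ne_zero hind
    haveI := Fintype.ofFinite (Quotient (QuotientGroup.rightRel H))
    calc Q.card ≤ Fintype.card (Quotient (QuotientGroup.rightRel H)) := Q.card_le_univ
      _ = _ := Nat.card_eq_fintype_card.symm
  refine le_trans ?_ first
  apply div_le_div_of_nonneg_left (by positivity) (by exact_mod_cast hQpos)
  exact_mod_cast hQle
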